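/- Weak Union in the probabilistic model: let f be an input-preserving Markov kernel and Z, X, Y, W ⊆ Var. If there exist input-preserving Markov kernels f1 : Mem(∅) → D(Mem(Z)), f2 : Mem(Z) → D(Mem(Z ∪ X)), f3 : Mem(Z) → D(Mem(Z ∪ Y ∪ W)) with f1 ⊙ (f2 ⊕ f3) ⊑ f, then there exist input-preserving Markov kernels g1 : Mem(∅) → D(Mem(Z ∪ W)), g2 : Mem(Z ∪ W) → D(Mem(Z ∪ W ∪ X)), g3 : Mem(Z ∪ W) → D(Mem(Z ∪ W ∪ Y)) with g1 ⊙ (g2 ⊕ g3) ⊑ f. -/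

import Mathlib

open scoped ENNReal

/-- A memory over a set `S` of variables: an assignment of a value to each
variable in `S`. -/
def Mem (Val Var : Type) (S : Set Var) : Type := S → Val

/-- Restriction (projection) of a memory to a smaller domain. -/
def restr {Val Var : Type} {S T : Set Var} (h : T ⊆ S) (m : Mem Val Var S) :
    Mem Val Var T :=
  fun t => m ⟨t.1, h t.2⟩

/-- Two memories (over possibly different domains) agree if they coincide on the
intersection of their domains.  For `T ⊆ S`, `Agree m r` says exactly that `r`
is the restriction `m^T`. -/
def Agree {Val Var : Type} {S T : Set Var} (m : Mem Val Var S) (r : Mem Val Var T) : Prop :=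
  ∀ (i : Var) (h1 : i ∈ S) (h2 : i ∈ T), m ⟨i, h1⟩ = r ⟨i, h2⟩
/-- A (sub)distribution as a mass function into `ℝ≥0∞`; `IsDist μ` says the total
mass is `1`, i.e. `μ` is a (finitely supported, as all types involved are finite)
probability distribution. -/
def IsDist {α : Type*} (μ : α → ℝ≥0∞) : Prop := ∑' a, μ a = 1

open Classical in
/-- Marginalization of a mass function on memories over `S` to memories over `T`
(intended for `T ⊆ S`). -/
noncomputable def marg {Val Var : Type} {S : Set Var} (μ : Mem Val Var S → ℝ≥0∞)
    (T : Set Var) : Mem Val Var T → ℝ≥0∞ :=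
  fun r => ∑' m : Mem Val Var S, if Agree m r then μ m else 0

open Classical in
/-- The point mass (Dirac distribution) at a memory. -/
noncomputable def dirac {Val Var : Type} {S : Set Var} (d : Mem Val Var S) :
    Mem Val Var S → ℝ≥0∞ :=
  fun r => if r = d then 1 else 0

/-- A Markov-kernel-shaped map on memories, with explicit domain and range. -/
structure PKernel (Val Var : Type) where
  dom : Set Var
  ran : Set Var
  f : Mem Val Var dom → Mem Val Var ran → ℝ≥0∞

/-- Membership in `M^D`: `K` is a Markov kernel (every output is a probability
distribution) that preserves its input to its output (the marginal of `K.f d`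
on the domain is the point mass at `d`). -/
def InMD {Val Var : Type} (K : PKernel Val Var) : Prop :=
  K.dom ⊆ K.ran ∧ (∀ d, IsDist (K.f d)) ∧ (∀ d, marg (K.f d) K.dom = dirac d)

/-- Definedness condition for parallel composition. -/
def OplusDef {Val Var : Type} (K1 K2 : PKernel Val Var) : Prop :=
  K1.ran ∩ K2.ran = K1.dom ∩ K2.dom

/-- Parallel composition of kernels. -/
noncomputable def poplus {Val Var : Type} (K1 K2 : PKernel Val Var) : PKernel Val Var where
  dom := K1.dom ∪ K2.dom
  ran := K1.ran ∪ K2.ran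
  f := fun d m =>
    K1.f (restr Set.subset_union_left d) (restr Set.subset_union_left m) *
    K2.f (restr Set.subset_union_right d) (restr Set.subset_union_right m)

open Classical in
/-- Sequential (Kleisli) composition of kernels, defined when
`K1.ran = K2.dom` (and returning the zero kernel otherwise). -/
noncomputable def podot {Val Var : Type} (K1 K2 : PKernel Val Var) : PKernel Val Var where
  dom := K1.dom
  ran := K2.ran
  f := fun d m =>
    if h : K1.ran = K2.dom then
      ∑' m' : Mem Val Var K1.ran, K1.f d m' * K2.f (restr (le_of_eq h.symm) m') m
    else 0

open Classical in
/-- The identity (unit) kernel on memories over `R`. -/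
noncomputable def unitK (Val Var : Type) (R : Set Var) : PKernel Val Var where
  dom := R
  ran := R
  f := fun d => dirac d

/-- The preorder on kernels: `f ⊑ g` iff `g = (f ⊕ unit_R) ⊙ h` for some set of
variables `R` and some `h ∈ M^D` (with both compositions defined). -/
def ple {Val Var : Type} (K1 K2 : PKernel Val Var) : Prop :=
  ∃ (R : Set Var) (h : PKernel Val Var), InMD h ∧
    OplusDef K1 (unitK Val Var R) ∧
    (poplus K1 (unitK Val Var R)).ran = h.dom ∧
    K2 = podot (poplus K1 (unitK Val Var R)) h

section Helpers
open Classical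
variable {Val Var : Type}

lemma memEmpty_eq (e e' : Mem Val Var (∅ : Set Var)) : e = e' :=
  funext fun i => absurd i.2 (Set.notMem_empty i.1)

/-- glue two memories, preferring the first -/
noncomputable def glueMem {A B C : Set Var} (h : C ⊆ A ∪ B) (u : Mem Val Var A)
    (v : Mem Val Var B) : Mem Val Var C :=
  fun i => if hA : i.1 ∈ A then u ⟨i.1, hA⟩ else v ⟨i.1, (h i.2).resolve_left hA⟩

lemma restr_glueMem {A B C : Set Var} (h : C ⊆ A ∪ B) (hA : A ⊆ C) (u : Mem Val Var A)
    (v : Mem Val Var B) : restr hA (glueMem h u v) = u := by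
  funext i
  simp only [restr, glueMem, dif_pos i.2]

lemma agree_iff_restr {S T : Set Var} (hT : T ⊆ S) (m : Mem Val Var S) (r : Mem Val Var T) :
    Agree m r ↔ restr hT m = r := by
  constructor
  · intro ha; funext i; exact (ha i.1 (hT i.2) i.2).symm ▸ rfl
  · intro he i h1 h2; rw [← he]; rfl

lemma nonempty_of_isDist {α : Type*} {μ : α → ℝ≥0∞} (h : IsDist μ) : Nonempty α := by
  by_contra hn
  rw [not_nonempty_iff] at hn
  rw [IsDist, tsum_empty] at h
  exact zero_ne_one h

lemma tsum_ite_support {α : Type*} (μ : α → ℝ≥0∞) (P : α → Prop)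
    (h : ∀ a, μ a ≠ 0 → P a) : ∑' a, (if P a then μ a else 0) = ∑' a, μ a := by
  refine tsum_congr fun a => ?_
  by_cases hμ : μ a = 0
  · simp [hμ]
  · rw [if_pos (h a hμ)]

lemma tsum_ite_le {α : Type*} (μ : α → ℝ≥0∞) (P : α → Prop) :
    ∑' a, (if P a then μ a else 0) ≤ ∑' a, μ a :=
  ENNReal.tsum_le_tsum fun a => by split_ifs <;> simp

lemma isDist_dirac {S : Set Var} (c : Mem Val Var S) : IsDist (dirac c) := by
  rw [IsDist]
  simp only [dirac]
  rw [tsum_eq_single c (fun b hb => if_neg hb)]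
  simp

lemma tsum_ite_point {α : Type*} (c : α) (F : α → ℝ≥0∞) :
    ∑' a, (if c = a then F a else 0) = F c := by
  rw [tsum_eq_single c (fun b hb => if_neg (fun h => hb h.symm))]
  simp

lemma support_restr_of_marg {S T : Set Var} (hT : T ⊆ S) {μ : Mem Val Var S → ℝ≥0∞}
    {z : Mem Val Var T} (hm : marg μ T = dirac z) :
    ∀ m, μ m ≠ 0 → restr hT m = z := by
  intro m hμ
  by_contra hne
  have h1 : marg μ T (restr hT m) = 0 := by rw [hm]; exact if_neg hne
  have h2 : μ m ≤ marg μ T (restr hT m) := by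
    have := ENNReal.le_tsum (f := fun m' : Mem Val Var S =>
      if Agree m' (restr hT m) then μ m' else 0) m
    rwa [if_pos ((agree_iff_restr hT m _).mpr rfl)] at this
  exact hμ (le_antisymm (h1 ▸ h2) zero_le)

lemma marg_eq_dirac_of {S T : Set Var} (hT : T ⊆ S) {μ : Mem Val Var S → ℝ≥0∞}
    {z : Mem Val Var T} (hd : IsDist μ) (hs : ∀ m, μ m ≠ 0 → restr hT m = z) :
    marg μ T = dirac z := by
  funext r
  rw [marg, dirac]
  by_cases hr : r = z
  · subst hr
    rw [if_pos rfl]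
    have : ∀ m : Mem Val Var S, (if Agree m r then μ m else 0) = μ m ∨ μ m = 0 := by
      intro m
      by_cases hμ : μ m = 0
      · right; exact hμ
      · left; rw [if_pos ((agree_iff_restr hT m r).mpr (hs m hμ))]
    calc ∑' m, (if Agree m r then μ m else 0)
        = ∑' m, μ m := by
          refine tsum_congr fun m => ?_
          rcases this m with h | h
          · exact h
          · simp [h]
      _ = 1 := hd
  · rw [if_neg hr]
    refine (tsum_congr fun m => ?_).trans tsum_zero
    by_cases hμ : μ m = 0
    · simp [hμ]
    · refine if_neg fun ha => ?_
      exact hr (((agree_iff_restr hT m r).mp ha).symm.trans (hs m hμ) ▸ rfl)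

lemma forcing {ι : Type*} (ν c : ι → ℝ≥0∞) (hν : ∑' i, ν i = 1) (hc : ∀ i, c i ≤ 1)
    (h : ∑' i, ν i * c i = 1) : ∀ i, ν i ≠ 0 → c i = 1 := by
  intro i0 hne
  by_contra hlt'
  have hlt : c i0 < 1 := lt_of_le_of_ne (hc i0) hlt'
  have hν0_le : ν i0 ≤ 1 := hν ▸ ENNReal.le_tsum i0
  have hν0_top : ν i0 ≠ ⊤ := fun h' => by simp [h'] at hν0_le
  set R := ∑' i, if i = i0 then 0 else ν i with hR
  have hR_le : R ≤ 1 := by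
    rw [← hν, ENNReal.tsum_eq_add_tsum_ite i0]; exact le_add_self
  have hR_top : R ≠ ⊤ := fun h' => by simp [h'] at hR_le
  have hsplit2 : (1 : ℝ≥0∞) = ν i0 * c i0 + ∑' i, if i = i0 then 0 else ν i * c i := by
    rw [← h, ENNReal.tsum_eq_add_tsum_ite i0]
  have hrest : (∑' i, if i = i0 then 0 else ν i * c i) ≤ R :=
    ENNReal.tsum_le_tsum fun i => by
      split_ifs
      · exact le_refl _
      · calc ν i * c i ≤ ν i * 1 := mul_le_mul_right (hc i) _
          _ = ν i := mul_one _
  have hmul : ν i0 * c i0 < ν i0 := by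
    calc ν i0 * c i0 < ν i0 * 1 := (ENNReal.mul_lt_mul_iff_right hne hν0_top).mpr hlt
      _ = ν i0 := mul_one _
  have hfin : (1 : ℝ≥0∞) < 1 := by
    calc (1:ℝ≥0∞) = ν i0 * c i0 + ∑' i, if i = i0 then 0 else ν i * c i := hsplit2
      _ ≤ ν i0 * c i0 + R := add_le_add_right hrest _
      _ < ν i0 + R := ENNReal.add_lt_add_right hR_top hmul
      _ = 1 := by rw [← hν, ENNReal.tsum_eq_add_tsum_ite i0]
  exact lt_irrefl _ hfin

lemma tsum_fiber {S B : Set Var} (hB : B ⊆ S) (f : Mem Val Var S → ℝ≥0∞) :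
    ∑' t, f t = ∑' v : Mem Val Var B, ∑' t, if restr hB t = v then f t else 0 := by
  rw [ENNReal.tsum_comm]
  refine tsum_congr fun t => ?_
  rw [tsum_eq_single (restr hB t) (fun b hb => if_neg fun hh => hb hh.symm)]
  rw [if_pos rfl]

lemma sum_glue {A B C : Set Var} (hA : A ⊆ C) (hB : B ⊆ C) (hc : C ⊆ A ∪ B)
    (v : Mem Val Var B) (F : Mem Val Var A → ℝ≥0∞) :
    ∑' t : Mem Val Var C, (if restr hB t = v then F (restr hA t) else 0)
      = ∑' u : Mem Val Var A, (if Agree u v then F u else 0) := by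
  refine tsum_eq_tsum_of_ne_zero_bij (fun u => glueMem hc u.1 v) ?_ ?_ ?_
  · intro u u' he
    have h1 : restr hA (glueMem hc (u : Mem Val Var A) v) = u := restr_glueMem hc hA _ _
    have h2 : restr hA (glueMem hc (u' : Mem Val Var A) v) = u' := restr_glueMem hc hA _ _
    apply Subtype.ext
    rw [← h1, ← h2]
    exact congrArg (restr hA) he
  · intro t ht
    simp only [Function.mem_support] at ht
    by_cases hcond : restr hB t = v
    · have hF : F (restr hA t) ≠ 0 := by
        intro h0; rw [if_pos hcond, h0] at ht; exact ht rfl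
      have hagree : Agree (restr hA t) v := by
        intro i h1 h2
        rw [← hcond]; rfl
      have hmem : (fun u : Mem Val Var A => if Agree u v then F u else 0) (restr hA t) ≠ 0 := by
        show (if Agree (restr hA t) v then F (restr hA t) else 0) ≠ 0
        rw [if_pos hagree]; exact hF
      refine ⟨⟨restr hA t, hmem⟩, ?_⟩
      funext i
      simp only [glueMem]
      split_ifs with hA'
      · rfl
      · rw [← hcond]; rfl
    · rw [if_neg hcond] at ht; exact absurd rfl ht
  · intro u
    have hagree : Agree (u : Mem Val Var A) v := by
      by_contra hn
      have := u.2
      simp only [Function.mem_support, if_neg hn] at this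
      exact this rfl
    have hcond : restr hB (glueMem hc (u : Mem Val Var A) v) = v := by
      funext j
      simp only [restr, glueMem]
      split_ifs with h
      · exact hagree j.1 h j.2
      · rfl
    rw [if_pos hcond, restr_glueMem hc hA, if_pos hagree]

lemma tsum_mem_reindex {S1 S2 : Set Var} (h : S2 = S1) (F : Mem Val Var S1 → ℝ≥0∞) :
    ∑' m : Mem Val Var S1, F m = ∑' n : Mem Val Var S2, F (restr (le_of_eq h.symm) n) := by
  subst h; rfl

lemma pk_eq {D R : Set Var} (k k' : Mem Val Var D → Mem Val Var R → ℝ≥0∞)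
    (h : ∀ d m, k d m = k' d m) : (⟨D, R, k⟩ : PKernel Val Var) = ⟨D, R, k'⟩ :=
  congrArg (PKernel.mk D R) (funext fun d => funext (h d))

end Helpers
set_option maxHeartbeats 3000000 in
open Classical in
/-- **Weak Union in the probabilistic model.** Let `f ∈ M^D` and
`Z, X, Y, W ⊆ Var`. If there are `f1 : Mem(∅) → D(Mem(Z))`,
`f2 : Mem(Z) → D(Mem(Z ∪ X))`, `f3 : Mem(Z) → D(Mem(Z ∪ Y ∪ W))` in `M^D` with
`f1 ⊙ (f2 ⊕ f3) ⊑ f`, then there are `g1 : Mem(∅) → D(Mem(Z ∪ W))`,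
`g2 : Mem(Z ∪ W) → D(Mem(Z ∪ W ∪ X))`, `g3 : Mem(Z ∪ W) → D(Mem(Z ∪ W ∪ Y))` in
`M^D` with `g1 ⊙ (g2 ⊕ g3) ⊑ f`. -/
theorem weak_union_probabilistic {Val Var : Type} [Fintype Val] [Fintype Var]
    (f : PKernel Val Var) (hf : InMD f) (Z X Y W : Set Var)
    (h : ∃ f1 f2 f3 : PKernel Val Var,
        InMD f1 ∧ InMD f2 ∧ InMD f3 ∧
        f1.dom = (∅ : Set Var) ∧ f1.ran = Z ∧
        f2.dom = Z ∧ f2.ran = Z ∪ X ∧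
        f3.dom = Z ∧ f3.ran = Z ∪ Y ∪ W ∧
        ple (podot f1 (poplus f2 f3)) f) :
    ∃ g1 g2 g3 : PKernel Val Var,
        InMD g1 ∧ InMD g2 ∧ InMD g3 ∧
        g1.dom = (∅ : Set Var) ∧ g1.ran = Z ∪ W ∧
        g2.dom = Z ∪ W ∧ g2.ran = Z ∪ W ∪ X ∧
        g3.dom = Z ∪ W ∧ g3.ran = Z ∪ W ∪ Y ∧
        ple (podot g1 (poplus g2 g3)) f := by
  classical
  obtain ⟨f1, f2, f3, hf1, hf2, hf3, h1d, h1r, h2d, h2r, h3d, h3r, hple⟩ := h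
  obtain ⟨R0, h0, hMD0, hOp0, hdom0, heqf⟩ := hple
  subst heqf
  obtain ⟨d1, r1, k1⟩ := f1
  change d1 = ∅ at h1d; change r1 = Z at h1r; subst d1; subst r1
  obtain ⟨d2, r2, k2⟩ := f2
  change d2 = Z at h2d; change r2 = Z ∪ X at h2r; subst d2; subst r2
  obtain ⟨d3, r3, k3⟩ := f3
  change d3 = Z at h3d; change r3 = Z ∪ Y ∪ W at h3r; subst d3; subst r3
  obtain ⟨D0, Rh, kh⟩ := h0
  change Z ∪ X ∪ (Z ∪ Y ∪ W) ∪ R0 = D0 at hdom0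
  subst D0
  change (Z ∪ X ∪ (Z ∪ Y ∪ W)) ∩ R0 = (∅ : Set Var) ∩ R0 at hOp0
  -- disjointness of R0 from the other sets
  have hdisj : ∀ i, i ∈ R0 → i ∈ Z ∪ X ∪ (Z ∪ Y ∪ W) → False := by
    intro i hR hT
    have h1 : i ∈ (Z ∪ X ∪ (Z ∪ Y ∪ W)) ∩ R0 := ⟨hT, hR⟩
    rw [hOp0] at h1
    exact (Set.notMem_empty i) h1.1
  -- subset facts
  have hZ_ZW : Z ⊆ Z ∪ W := Set.subset_union_left
  have hZ_ZX : Z ⊆ Z ∪ X := Set.subset_union_left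
  have hZ_ZYW : Z ⊆ Z ∪ Y ∪ W := by intro i hi; simp only [Set.mem_union]; tauto
  have hZW_ZWX : Z ∪ W ⊆ Z ∪ W ∪ X := Set.subset_union_left
  have hZW_ZWY : Z ∪ W ⊆ Z ∪ W ∪ Y := Set.subset_union_left
  have hZX_ZWX : Z ∪ X ⊆ Z ∪ W ∪ X := by intro i hi; simp only [Set.mem_union] at *; tauto
  have hZYW_ZWY : Z ∪ Y ∪ W ⊆ Z ∪ W ∪ Y := by intro i hi; simp only [Set.mem_union] at *; tauto
  have hZW_ZYW : Z ∪ W ⊆ Z ∪ Y ∪ W := by intro i hi; simp only [Set.mem_union] at *; tauto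
  have hZX_T : Z ∪ X ⊆ Z ∪ X ∪ (Z ∪ Y ∪ W) := Set.subset_union_left
  have hZYW_T : Z ∪ Y ∪ W ⊆ Z ∪ X ∪ (Z ∪ Y ∪ W) := Set.subset_union_right
  have hT_E : Z ∪ X ∪ (Z ∪ Y ∪ W) ⊆ Z ∪ X ∪ (Z ∪ Y ∪ W) ∪ R0 := Set.subset_union_left
  have hR_E : R0 ⊆ Z ∪ X ∪ (Z ∪ Y ∪ W) ∪ R0 := Set.subset_union_right
  have hS_E : Z ∪ W ∪ X ∪ (Z ∪ W ∪ Y) ⊆ Z ∪ X ∪ (Z ∪ Y ∪ W) ∪ R0 := by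
    intro i hi; simp only [Set.mem_union] at *; tauto
  have hZW_E : Z ∪ W ⊆ Z ∪ X ∪ (Z ∪ Y ∪ W) ∪ R0 := by
    intro i hi; simp only [Set.mem_union] at *; tauto
  have hZ_E : Z ⊆ Z ∪ X ∪ (Z ∪ Y ∪ W) ∪ R0 := by
    intro i hi; simp only [Set.mem_union] at *; tauto
  have hZX_E : Z ∪ X ⊆ Z ∪ X ∪ (Z ∪ Y ∪ W) ∪ R0 := by
    intro i hi; simp only [Set.mem_union] at *; tauto
  have hZYW_E : Z ∪ Y ∪ W ⊆ Z ∪ X ∪ (Z ∪ Y ∪ W) ∪ R0 := by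
    intro i hi; simp only [Set.mem_union] at *; tauto
  have hZWX_E : Z ∪ W ∪ X ⊆ Z ∪ X ∪ (Z ∪ Y ∪ W) ∪ R0 := by
    intro i hi; simp only [Set.mem_union] at *; tauto
  have hZWY_E : Z ∪ W ∪ Y ⊆ Z ∪ X ∪ (Z ∪ Y ∪ W) ∪ R0 := by
    intro i hi; simp only [Set.mem_union] at *; tauto
  have hcov2 : Z ∪ W ∪ X ⊆ (Z ∪ W) ∪ (Z ∪ X) := by
    intro i hi; simp only [Set.mem_union] at *; tauto
  have hcovG2 : Z ∪ W ∪ X ⊆ (Z ∪ X) ∪ (Z ∪ W) := by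
    intro i hi; simp only [Set.mem_union] at *; tauto
  have hcov3 : Z ∪ W ∪ Y ⊆ (Z ∪ W) ∪ (Z ∪ Y ∪ W) := by
    intro i hi; simp only [Set.mem_union] at *; tauto
  have hcovG3 : Z ∪ W ∪ Y ⊆ (Z ∪ Y ∪ W) ∪ (Z ∪ W) := by
    intro i hi; simp only [Set.mem_union] at *; tauto
  have hA2 : Z ∪ W ∪ X ⊆ Z ∪ W ∪ X ∪ (Z ∪ W ∪ Y) := Set.subset_union_left
  have hA3 : Z ∪ W ∪ Y ⊆ Z ∪ W ∪ X ∪ (Z ∪ W ∪ Y) := Set.subset_union_right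
  have hZZ : Z = Z ∪ Z := (Set.union_self Z).symm
  have hZWZW : Z ∪ W = (Z ∪ W) ∪ (Z ∪ W) := (Set.union_self _).symm
  -- points
  have estar : Mem Val Var (∅ : Set Var) := fun i => absurd i.2 (Set.notMem_empty i.1)
  have hnZ : Nonempty (Mem Val Var Z) := nonempty_of_isDist (hf1.2.1 estar)
  have p2 : Mem Val Var (Z ∪ X) :=
    Classical.choice (nonempty_of_isDist (hf2.2.1 (Classical.choice hnZ)))
  have p3 : Mem Val Var (Z ∪ Y ∪ W) :=
    Classical.choice (nonempty_of_isDist (hf3.2.1 (Classical.choice hnZ)))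
  -- the conditional masses
  set lam : Mem Val Var (Z ∪ W) → ℝ≥0∞ := fun m =>
    ∑' v : Mem Val Var (Z ∪ Y ∪ W), if Agree v m then k3 (restr hZ_ZW m) v else 0 with hlam_def
  set am : Mem Val Var (Z ∪ W) → ℝ≥0∞ := fun m =>
    ∑' u : Mem Val Var (Z ∪ X), if Agree u m then k2 (restr hZ_ZW m) u else 0 with ham_def
  have hlam_le : ∀ m, lam m ≤ 1 := fun m =>
    (tsum_ite_le _ _).trans (le_of_eq (hf3.2.1 (restr hZ_ZW m)))
  have ham_le : ∀ m, am m ≤ 1 := fun m =>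
    (tsum_ite_le _ _).trans (le_of_eq (hf2.2.1 (restr hZ_ZW m)))
  have hlam_top : ∀ m, lam m ≠ ⊤ := fun m => ((hlam_le m).trans_lt ENNReal.one_lt_top).ne
  have ham_top : ∀ m, am m ≠ ⊤ := fun m => ((ham_le m).trans_lt ENNReal.one_lt_top).ne
  -- support facts
  have hk2supp : ∀ z u, k2 z u ≠ 0 → restr hZ_ZX u = z := fun z =>
    support_restr_of_marg hZ_ZX (hf2.2.2 z)
  have hk3supp : ∀ z v, k3 z v ≠ 0 → restr hZ_ZYW v = z := fun z =>
    support_restr_of_marg hZ_ZYW (hf3.2.2 z)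
  -- the new kernels
  set G1 : PKernel Val Var :=
    ⟨∅, Z ∪ W, fun d m => k1 d (restr hZ_ZW m) * lam m⟩ with hG1_def
  set G2 : PKernel Val Var :=
    ⟨Z ∪ W, Z ∪ W ∪ X, fun m q =>
      if am m = 0 then dirac (glueMem hcov2 m p2) q
      else if restr hZW_ZWX q = m then
        k2 (restr hZ_ZW m) (restr hZX_ZWX q) * (am m)⁻¹ else 0⟩ with hG2_def
  set G3 : PKernel Val Var :=
    ⟨Z ∪ W, Z ∪ W ∪ Y, fun m p =>
      if lam m = 0 then dirac (glueMem hcov3 m p3) p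
      else if restr hZW_ZWY p = m then
        k3 (restr hZ_ZW m) (restr hZYW_ZWY p) * (lam m)⁻¹ else 0⟩ with hG3_def
  -- distribution properties
  have hG1dist : ∀ d, IsDist (G1.f d) := by
    intro d
    show (∑' m : Mem Val Var (Z ∪ W), k1 d (restr hZ_ZW m) * lam m) = 1
    calc
      ∑' m : Mem Val Var (Z ∪ W), k1 d (restr hZ_ZW m) * lam m
        = ∑' m : Mem Val Var (Z ∪ W), ∑' v : Mem Val Var (Z ∪ Y ∪ W),
            (if Agree v m then k1 d (restr hZ_ZW m) * k3 (restr hZ_ZW m) v else 0) := by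
          refine tsum_congr fun m => ?_
          simp only [hlam_def]
          rw [← ENNReal.tsum_mul_left]
          exact tsum_congr fun v => by rw [mul_ite, mul_zero]
      _ = ∑' v : Mem Val Var (Z ∪ Y ∪ W), ∑' m : Mem Val Var (Z ∪ W),
            (if Agree v m then k1 d (restr hZ_ZW m) * k3 (restr hZ_ZW m) v else 0) :=
          ENNReal.tsum_comm
      _ = ∑' v : Mem Val Var (Z ∪ Y ∪ W), k1 d (restr hZ_ZYW v) * k3 (restr hZ_ZYW v) v := by
          refine tsum_congr fun v => ?_
          calc ∑' m, (if Agree v m then k1 d (restr hZ_ZW m) * k3 (restr hZ_ZW m) v else 0)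
              = ∑' m, (if restr hZW_ZYW v = m then
                  k1 d (restr hZ_ZW m) * k3 (restr hZ_ZW m) v else 0) := by
                refine tsum_congr fun m => ?_
                rw [show Agree v m ↔ restr hZW_ZYW v = m from agree_iff_restr hZW_ZYW v m]
            _ = k1 d (restr hZ_ZW (restr hZW_ZYW v)) * k3 (restr hZ_ZW (restr hZW_ZYW v)) v :=
                tsum_ite_point _ _
            _ = k1 d (restr hZ_ZYW v) * k3 (restr hZ_ZYW v) v := rfl
      _ = ∑' z : Mem Val Var Z, ∑' v : Mem Val Var (Z ∪ Y ∪ W),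
            (if restr hZ_ZYW v = z then k1 d (restr hZ_ZYW v) * k3 (restr hZ_ZYW v) v else 0) :=
          tsum_fiber hZ_ZYW _
      _ = ∑' z : Mem Val Var Z, k1 d z * ∑' v, (if restr hZ_ZYW v = z then k3 z v else 0) := by
          refine tsum_congr fun z => ?_
          rw [← ENNReal.tsum_mul_left]
          refine tsum_congr fun v => ?_
          by_cases hv : restr hZ_ZYW v = z
          · rw [if_pos hv, if_pos hv, hv]
          · rw [if_neg hv, if_neg hv, mul_zero]
      _ = ∑' z : Mem Val Var Z, k1 d z * 1 := by
          refine tsum_congr fun z => ?_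
          rw [tsum_ite_support (k3 z) _ (hk3supp z),
            show (∑' v, k3 z v) = 1 from hf3.2.1 z]
      _ = 1 := by
          simp only [mul_one]
          exact hf1.2.1 d
  have hG2dist : ∀ m, IsDist (G2.f m) := by
    intro m
    show (∑' q : Mem Val Var (Z ∪ W ∪ X),
        (if am m = 0 then dirac (glueMem hcov2 m p2) q
         else if restr hZW_ZWX q = m then
           k2 (restr hZ_ZW m) (restr hZX_ZWX q) * (am m)⁻¹ else 0)) = 1
    by_cases ham : am m = 0
    · calc ∑' q : Mem Val Var (Z ∪ W ∪ X),
            (if am m = 0 then dirac (glueMem hcov2 m p2) q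
             else if restr hZW_ZWX q = m then
               k2 (restr hZ_ZW m) (restr hZX_ZWX q) * (am m)⁻¹ else 0)
          = ∑' q, dirac (glueMem hcov2 m p2) q := tsum_congr fun q => if_pos ham
        _ = 1 := isDist_dirac _
    · calc ∑' q : Mem Val Var (Z ∪ W ∪ X),
            (if am m = 0 then dirac (glueMem hcov2 m p2) q
             else if restr hZW_ZWX q = m then
               k2 (restr hZ_ZW m) (restr hZX_ZWX q) * (am m)⁻¹ else 0)
          = ∑' q : Mem Val Var (Z ∪ W ∪ X),
              (if restr hZW_ZWX q = m then k2 (restr hZ_ZW m) (restr hZX_ZWX q) else 0)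
                * (am m)⁻¹ :=
            tsum_congr fun q => by rw [if_neg ham, ite_mul, zero_mul]
        _ = (∑' q : Mem Val Var (Z ∪ W ∪ X),
              (if restr hZW_ZWX q = m then k2 (restr hZ_ZW m) (restr hZX_ZWX q) else 0))
                * (am m)⁻¹ := ENNReal.tsum_mul_right
        _ = (∑' u : Mem Val Var (Z ∪ X), if Agree u m then k2 (restr hZ_ZW m) u else 0)
                * (am m)⁻¹ := by
            rw [sum_glue hZX_ZWX hZW_ZWX hcovG2 m (fun u => k2 (restr hZ_ZW m) u)]
        _ = am m * (am m)⁻¹ := by simp only [ham_def]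
        _ = 1 := ENNReal.mul_inv_cancel ham (ham_top m)
  have hG3dist : ∀ m, IsDist (G3.f m) := by
    intro m
    show (∑' p : Mem Val Var (Z ∪ W ∪ Y),
        (if lam m = 0 then dirac (glueMem hcov3 m p3) p
         else if restr hZW_ZWY p = m then
           k3 (restr hZ_ZW m) (restr hZYW_ZWY p) * (lam m)⁻¹ else 0)) = 1
    by_cases hlm : lam m = 0
    · calc ∑' p : Mem Val Var (Z ∪ W ∪ Y),
            (if lam m = 0 then dirac (glueMem hcov3 m p3) p
             else if restr hZW_ZWY p = m then
               k3 (restr hZ_ZW m) (restr hZYW_ZWY p) * (lam m)⁻¹ else 0)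
          = ∑' p, dirac (glueMem hcov3 m p3) p := tsum_congr fun p => if_pos hlm
        _ = 1 := isDist_dirac _
    · calc ∑' p : Mem Val Var (Z ∪ W ∪ Y),
            (if lam m = 0 then dirac (glueMem hcov3 m p3) p
             else if restr hZW_ZWY p = m then
               k3 (restr hZ_ZW m) (restr hZYW_ZWY p) * (lam m)⁻¹ else 0)
          = ∑' p : Mem Val Var (Z ∪ W ∪ Y),
              (if restr hZW_ZWY p = m then k3 (restr hZ_ZW m) (restr hZYW_ZWY p) else 0)
                * (lam m)⁻¹ :=
            tsum_congr fun p => by rw [if_neg hlm, ite_mul, zero_mul]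
        _ = (∑' p : Mem Val Var (Z ∪ W ∪ Y),
              (if restr hZW_ZWY p = m then k3 (restr hZ_ZW m) (restr hZYW_ZWY p) else 0))
                * (lam m)⁻¹ := ENNReal.tsum_mul_right
        _ = (∑' v : Mem Val Var (Z ∪ Y ∪ W), if Agree v m then k3 (restr hZ_ZW m) v else 0)
                * (lam m)⁻¹ := by
            rw [sum_glue hZYW_ZWY hZW_ZWY hcovG3 m (fun v => k3 (restr hZ_ZW m) v)]
        _ = lam m * (lam m)⁻¹ := by simp only [hlam_def]
        _ = 1 := ENNReal.mul_inv_cancel hlm (hlam_top m)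
  have hG2supp : ∀ m q, G2.f m q ≠ 0 → restr hZW_ZWX q = m := by
    intro m q hne
    change (if am m = 0 then dirac (glueMem hcov2 m p2) q
      else if restr hZW_ZWX q = m then
        k2 (restr hZ_ZW m) (restr hZX_ZWX q) * (am m)⁻¹ else 0) ≠ 0 at hne
    by_cases ham : am m = 0
    · rw [if_pos ham] at hne
      have hq : q = glueMem hcov2 m p2 := by
        by_contra hq
        simp only [dirac, if_neg hq] at hne
        exact hne rfl
      rw [hq, restr_glueMem]
    · rw [if_neg ham] at hne
      by_contra hc
      rw [if_neg hc] at hne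
      exact hne rfl
  have hG3supp : ∀ m p, G3.f m p ≠ 0 → restr hZW_ZWY p = m := by
    intro m p hne
    change (if lam m = 0 then dirac (glueMem hcov3 m p3) p
      else if restr hZW_ZWY p = m then
        k3 (restr hZ_ZW m) (restr hZYW_ZWY p) * (lam m)⁻¹ else 0) ≠ 0 at hne
    by_cases hlm : lam m = 0
    · rw [if_pos hlm] at hne
      have hp : p = glueMem hcov3 m p3 := by
        by_contra hp
        simp only [dirac, if_neg hp] at hne
        exact hne rfl
      rw [hp, restr_glueMem]
    · rw [if_neg hlm] at hne
      by_contra hc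
      rw [if_neg hc] at hne
      exact hne rfl
  refine ⟨G1, G2, G3,
    ⟨Set.empty_subset _, hG1dist, fun d => marg_eq_dirac_of (Set.empty_subset _)
      (hG1dist d) (fun m _ => memEmpty_eq _ _)⟩,
    ⟨hZW_ZWX, hG2dist, fun m => marg_eq_dirac_of hZW_ZWX (hG2dist m) (hG2supp m)⟩,
    ⟨hZW_ZWY, hG3dist, fun m => marg_eq_dirac_of hZW_ZWY (hG3dist m) (hG3supp m)⟩,
    rfl, rfl, rfl, rfl, rfl, rfl, ?_⟩
  refine ⟨R0, ⟨Z ∪ X ∪ (Z ∪ Y ∪ W) ∪ R0, Rh, kh⟩, hMD0, ?_, ?_, ?_⟩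
  · -- OplusDef
    change (Z ∪ W ∪ X ∪ (Z ∪ W ∪ Y)) ∩ R0 = (∅ : Set Var) ∩ R0
    ext i
    simp only [Set.mem_inter_iff, Set.mem_union, Set.mem_empty_iff_false]
    constructor
    · rintro ⟨h1, h2⟩
      exact absurd (hdisj i h2 (by simp only [Set.mem_union]; tauto)) not_false
    · rintro ⟨h1, h2⟩
      exact h1.elim
  · -- dom eq
    change Z ∪ W ∪ X ∪ (Z ∪ W ∪ Y) ∪ R0 = Z ∪ X ∪ (Z ∪ Y ∪ W) ∪ R0
    ext i
    simp only [Set.mem_union]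
    tauto
  · -- kernel equality
    -- the distribution produced by f1 ⊙ (f2 ⊕ f3)
    set muf : Mem Val Var (Z ∪ X ∪ (Z ∪ Y ∪ W)) → ℝ≥0∞ := fun t =>
      ∑' z : Mem Val Var Z, k1 estar z * (k2 z (restr hZX_T t) * k3 z (restr hZYW_T t))
      with hmuf_def
    set cz : Mem Val Var Z → ℝ≥0∞ := fun z =>
      ∑' t : Mem Val Var (Z ∪ X ∪ (Z ∪ Y ∪ W)),
        k2 z (restr hZX_T t) * k3 z (restr hZYW_T t) with hcz_def
    set Av : Mem Val Var Z → Mem Val Var (Z ∪ Y ∪ W) → ℝ≥0∞ := fun z v =>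
      ∑' u : Mem Val Var (Z ∪ X), if Agree u v then k2 z u else 0 with hAv_def
    have hAv_le : ∀ z v, Av z v ≤ 1 := fun z v =>
      (tsum_ite_le _ _).trans (le_of_eq (hf2.2.1 z))
    have hFf : ∀ (e : Mem Val Var (∅ : Set Var)) (t : Mem Val Var (Z ∪ X ∪ (Z ∪ Y ∪ W))),
        (podot (⟨∅, Z, k1⟩ : PKernel Val Var)
          (poplus (⟨Z, Z ∪ X, k2⟩ : PKernel Val Var) (⟨Z, Z ∪ Y ∪ W, k3⟩ : PKernel Val Var))).f e t
          = muf t := by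
      intro e t
      calc (podot (⟨∅, Z, k1⟩ : PKernel Val Var)
          (poplus (⟨Z, Z ∪ X, k2⟩ : PKernel Val Var) (⟨Z, Z ∪ Y ∪ W, k3⟩ : PKernel Val Var))).f e t
          = ∑' z : Mem Val Var Z, k1 e z * (k2 z (restr hZX_T t) * k3 z (restr hZYW_T t)) :=
            dif_pos hZZ
        _ = muf t := by
            simp only [hmuf_def]
            exact tsum_congr fun z => by rw [memEmpty_eq e estar]
    have hGf : ∀ (e : Mem Val Var (∅ : Set Var))
        (n : Mem Val Var (Z ∪ W ∪ X ∪ (Z ∪ W ∪ Y))),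
        (podot G1 (poplus G2 G3)).f e n
          = ∑' m : Mem Val Var (Z ∪ W),
              (k1 estar (restr hZ_ZW m) * lam m) *
                (G2.f m (restr hA2 n) * G3.f m (restr hA3 n)) := by
      intro e n
      calc (podot G1 (poplus G2 G3)).f e n
          = ∑' m : Mem Val Var (Z ∪ W),
              (k1 e (restr hZ_ZW m) * lam m) *
                (G2.f m (restr hA2 n) * G3.f m (restr hA3 n)) := dif_pos hZWZW
        _ = _ := tsum_congr fun m => by rw [memEmpty_eq e estar]
    -- total mass of muf is 1
    have hmass : ∀ _d : Mem Val Var ((∅ : Set Var) ∪ R0),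
        (∑' t : Mem Val Var (Z ∪ X ∪ (Z ∪ Y ∪ W)), muf t) = 1 := by
      intro d
      have hd : IsDist ((podot (poplus (podot (⟨∅, Z, k1⟩ : PKernel Val Var)
          (poplus (⟨Z, Z ∪ X, k2⟩ : PKernel Val Var) (⟨Z, Z ∪ Y ∪ W, k3⟩ : PKernel Val Var)))
          (unitK Val Var R0))
          (⟨Z ∪ X ∪ (Z ∪ Y ∪ W) ∪ R0, Rh, kh⟩ : PKernel Val Var)).f d) := hf.2.1 d
      have h1 : ∀ mR : Mem Val Var Rh,
          (podot (poplus (podot (⟨∅, Z, k1⟩ : PKernel Val Var)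
            (poplus (⟨Z, Z ∪ X, k2⟩ : PKernel Val Var) (⟨Z, Z ∪ Y ∪ W, k3⟩ : PKernel Val Var)))
            (unitK Val Var R0))
            (⟨Z ∪ X ∪ (Z ∪ Y ∪ W) ∪ R0, Rh, kh⟩ : PKernel Val Var)).f d mR
          = ∑' m' : Mem Val Var (Z ∪ X ∪ (Z ∪ Y ∪ W) ∪ R0),
              (poplus (podot (⟨∅, Z, k1⟩ : PKernel Val Var)
                (poplus (⟨Z, Z ∪ X, k2⟩ : PKernel Val Var) (⟨Z, Z ∪ Y ∪ W, k3⟩ : PKernel Val Var)))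
                (unitK Val Var R0)).f d m' * kh m' mR := fun mR => dif_pos rfl
      have h2 : (∑' m' : Mem Val Var (Z ∪ X ∪ (Z ∪ Y ∪ W) ∪ R0),
          (poplus (podot (⟨∅, Z, k1⟩ : PKernel Val Var)
            (poplus (⟨Z, Z ∪ X, k2⟩ : PKernel Val Var) (⟨Z, Z ∪ Y ∪ W, k3⟩ : PKernel Val Var)))
            (unitK Val Var R0)).f d m') = 1 := by
        calc ∑' m' : Mem Val Var (Z ∪ X ∪ (Z ∪ Y ∪ W) ∪ R0),
            (poplus (podot (⟨∅, Z, k1⟩ : PKernel Val Var)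
              (poplus (⟨Z, Z ∪ X, k2⟩ : PKernel Val Var) (⟨Z, Z ∪ Y ∪ W, k3⟩ : PKernel Val Var)))
              (unitK Val Var R0)).f d m'
            = ∑' m' : Mem Val Var (Z ∪ X ∪ (Z ∪ Y ∪ W) ∪ R0),
              (poplus (podot (⟨∅, Z, k1⟩ : PKernel Val Var)
                (poplus (⟨Z, Z ∪ X, k2⟩ : PKernel Val Var) (⟨Z, Z ∪ Y ∪ W, k3⟩ : PKernel Val Var)))
                (unitK Val Var R0)).f d m' * (∑' mR : Mem Val Var Rh, kh m' mR) := by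
              refine tsum_congr fun m' => ?_
              rw [show (∑' mR : Mem Val Var Rh, kh m' mR) = 1 from hMD0.2.1 m', mul_one]
          _ = ∑' m' : Mem Val Var (Z ∪ X ∪ (Z ∪ Y ∪ W) ∪ R0), ∑' mR : Mem Val Var Rh,
              (poplus (podot (⟨∅, Z, k1⟩ : PKernel Val Var)
                (poplus (⟨Z, Z ∪ X, k2⟩ : PKernel Val Var) (⟨Z, Z ∪ Y ∪ W, k3⟩ : PKernel Val Var)))
                (unitK Val Var R0)).f d m' * kh m' mR :=
              tsum_congr fun m' => ENNReal.tsum_mul_left.symm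
          _ = ∑' mR : Mem Val Var Rh, ∑' m' : Mem Val Var (Z ∪ X ∪ (Z ∪ Y ∪ W) ∪ R0),
              (poplus (podot (⟨∅, Z, k1⟩ : PKernel Val Var)
                (poplus (⟨Z, Z ∪ X, k2⟩ : PKernel Val Var) (⟨Z, Z ∪ Y ∪ W, k3⟩ : PKernel Val Var)))
                (unitK Val Var R0)).f d m' * kh m' mR := ENNReal.tsum_comm
          _ = ∑' mR : Mem Val Var Rh,
              (podot (poplus (podot (⟨∅, Z, k1⟩ : PKernel Val Var)
                (poplus (⟨Z, Z ∪ X, k2⟩ : PKernel Val Var) (⟨Z, Z ∪ Y ∪ W, k3⟩ : PKernel Val Var)))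
                (unitK Val Var R0))
                (⟨Z ∪ X ∪ (Z ∪ Y ∪ W) ∪ R0, Rh, kh⟩ : PKernel Val Var)).f d mR :=
              tsum_congr fun mR => (h1 mR).symm
          _ = 1 := hd
      calc (∑' t : Mem Val Var (Z ∪ X ∪ (Z ∪ Y ∪ W)), muf t)
          = ∑' t : Mem Val Var (Z ∪ X ∪ (Z ∪ Y ∪ W)),
              (if Agree t (restr (Set.subset_union_right :
                R0 ⊆ (∅ : Set Var) ∪ R0) d) then muf t else 0) :=
            (tsum_ite_support muf _
              (fun t _ => fun i h1' h2' => (hdisj i h2' h1').elim)).symm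
        _ = ∑' m' : Mem Val Var (Z ∪ X ∪ (Z ∪ Y ∪ W) ∪ R0),
            (if restr (Set.subset_union_right : R0 ⊆ Z ∪ X ∪ (Z ∪ Y ∪ W) ∪ R0) m'
                = restr (Set.subset_union_right : R0 ⊆ (∅ : Set Var) ∪ R0) d then
              muf (restr (Set.subset_union_left :
                Z ∪ X ∪ (Z ∪ Y ∪ W) ⊆ Z ∪ X ∪ (Z ∪ Y ∪ W) ∪ R0) m') else 0) :=
            (sum_glue Set.subset_union_left Set.subset_union_right subset_rfl _ muf).symm
        _ = ∑' m' : Mem Val Var (Z ∪ X ∪ (Z ∪ Y ∪ W) ∪ R0),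
            (poplus (podot (⟨∅, Z, k1⟩ : PKernel Val Var)
              (poplus (⟨Z, Z ∪ X, k2⟩ : PKernel Val Var) (⟨Z, Z ∪ Y ∪ W, k3⟩ : PKernel Val Var)))
              (unitK Val Var R0)).f d m' := by
            refine tsum_congr fun m' => ?_
            calc (if restr (Set.subset_union_right : R0 ⊆ Z ∪ X ∪ (Z ∪ Y ∪ W) ∪ R0) m'
                = restr (Set.subset_union_right : R0 ⊆ (∅ : Set Var) ∪ R0) d then
                  muf (restr (Set.subset_union_left :
                    Z ∪ X ∪ (Z ∪ Y ∪ W) ⊆ Z ∪ X ∪ (Z ∪ Y ∪ W) ∪ R0) m') else 0)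
                = muf (restr (Set.subset_union_left :
                    Z ∪ X ∪ (Z ∪ Y ∪ W) ⊆ Z ∪ X ∪ (Z ∪ Y ∪ W) ∪ R0) m') *
                  (if restr (Set.subset_union_right : R0 ⊆ Z ∪ X ∪ (Z ∪ Y ∪ W) ∪ R0) m'
                    = restr (Set.subset_union_right : R0 ⊆ (∅ : Set Var) ∪ R0) d
                    then 1 else 0) := by rw [mul_ite, mul_one, mul_zero]
              _ = (poplus (podot (⟨∅, Z, k1⟩ : PKernel Val Var)
                  (poplus (⟨Z, Z ∪ X, k2⟩ : PKernel Val Var)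
                    (⟨Z, Z ∪ Y ∪ W, k3⟩ : PKernel Val Var)))
                  (unitK Val Var R0)).f d m' := by
                  rw [← hFf (restr Set.subset_union_left d)
                    (restr Set.subset_union_left m')]
                  rfl
        _ = 1 := h2
    -- the key forcing facts and the main pointwise identity
    have hc_eq : ∀ z, cz z = ∑' v : Mem Val Var (Z ∪ Y ∪ W), k3 z v * Av z v := by
      intro z
      simp only [hcz_def, hAv_def]
      calc ∑' t : Mem Val Var (Z ∪ X ∪ (Z ∪ Y ∪ W)),
            k2 z (restr hZX_T t) * k3 z (restr hZYW_T t)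
          = ∑' v : Mem Val Var (Z ∪ Y ∪ W), ∑' t,
              (if restr hZYW_T t = v then
                k2 z (restr hZX_T t) * k3 z (restr hZYW_T t) else 0) := tsum_fiber hZYW_T _
        _ = ∑' v : Mem Val Var (Z ∪ Y ∪ W), ∑' t,
              (if restr hZYW_T t = v then k2 z (restr hZX_T t) else 0) * k3 z v :=
            tsum_congr fun v => tsum_congr fun t => by
              by_cases hvt : restr hZYW_T t = v
              · rw [if_pos hvt, if_pos hvt, hvt]
              · rw [if_neg hvt, if_neg hvt, zero_mul]
        _ = ∑' v : Mem Val Var (Z ∪ Y ∪ W),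
              (∑' t, (if restr hZYW_T t = v then k2 z (restr hZX_T t) else 0)) * k3 z v :=
            tsum_congr fun v => ENNReal.tsum_mul_right
        _ = ∑' v : Mem Val Var (Z ∪ Y ∪ W),
              (∑' u : Mem Val Var (Z ∪ X), if Agree u v then k2 z u else 0) * k3 z v :=
            tsum_congr fun v => by
              rw [sum_glue hZX_T hZYW_T subset_rfl v (fun u => k2 z u)]
        _ = ∑' v : Mem Val Var (Z ∪ Y ∪ W), k3 z v *
              (∑' u : Mem Val Var (Z ∪ X), if Agree u v then k2 z u else 0) :=
            tsum_congr fun v => mul_comm _ _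
    have hc_le : ∀ z, cz z ≤ 1 := by
      intro z
      rw [hc_eq z]
      calc ∑' v, k3 z v * Av z v ≤ ∑' v, k3 z v * 1 :=
            ENNReal.tsum_le_tsum fun v => mul_le_mul_right (hAv_le z v) _
        _ = 1 := by
            simp only [mul_one]
            exact hf3.2.1 z
    have hmass2 : ∀ _d : Mem Val Var ((∅ : Set Var) ∪ R0),
        (∑' z : Mem Val Var Z, k1 estar z * cz z) = 1 := by
      intro d
      calc ∑' z : Mem Val Var Z, k1 estar z * cz z
          = ∑' z : Mem Val Var Z, ∑' t : Mem Val Var (Z ∪ X ∪ (Z ∪ Y ∪ W)),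
              k1 estar z * (k2 z (restr hZX_T t) * k3 z (restr hZYW_T t)) :=
            tsum_congr fun z => by
              simp only [hcz_def]
              exact ENNReal.tsum_mul_left.symm
        _ = ∑' t : Mem Val Var (Z ∪ X ∪ (Z ∪ Y ∪ W)), ∑' z : Mem Val Var Z,
              k1 estar z * (k2 z (restr hZX_T t) * k3 z (restr hZYW_T t)) := ENNReal.tsum_comm
        _ = ∑' t : Mem Val Var (Z ∪ X ∪ (Z ∪ Y ∪ W)), muf t :=
            tsum_congr fun t => by simp only [hmuf_def]
        _ = 1 := hmass d
    have main : (∑' z : Mem Val Var Z, k1 estar z * cz z) = 1 →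
        ∀ (e : Mem Val Var (∅ : Set Var)) (w : Mem Val Var (Z ∪ X ∪ (Z ∪ Y ∪ W) ∪ R0)),
        (podot G1 (poplus G2 G3)).f e (restr hS_E w)
          = (podot (⟨∅, Z, k1⟩ : PKernel Val Var)
              (poplus (⟨Z, Z ∪ X, k2⟩ : PKernel Val Var)
                (⟨Z, Z ∪ Y ∪ W, k3⟩ : PKernel Val Var))).f e (restr hT_E w) := by
      intro hm1 e w
      have hAgvm : Agree (restr hZYW_E w) (restr hZW_E w) := fun i h1 h2 => rfl
      have hk3le : k3 (restr hZ_E w) (restr hZYW_E w) ≤ lam (restr hZW_E w) := by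
        have hle := ENNReal.le_tsum (f := fun v : Mem Val Var (Z ∪ Y ∪ W) =>
          if Agree v (restr hZW_E w) then k3 (restr hZ_ZW (restr hZW_E w)) v else 0)
          (restr hZYW_E w)
        rw [if_pos hAgvm] at hle
        exact hle
      have hforce : k1 estar (restr hZ_E w) ≠ 0 → k3 (restr hZ_E w) (restr hZYW_E w) ≠ 0 →
          am (restr hZW_E w) = 1 := by
        intro h1 h3
        have hc1 : cz (restr hZ_E w) = 1 :=
          forcing (k1 estar) cz (hf1.2.1 estar) hc_le hm1 _ h1
        have hAv1 : Av (restr hZ_E w) (restr hZYW_E w) = 1 :=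
          forcing (k3 (restr hZ_E w)) (Av (restr hZ_E w)) (hf3.2.1 _)
            (hAv_le _) ((hc_eq _).symm.trans hc1) _ h3
        refine le_antisymm (ham_le _) ?_
        rw [← hAv1]
        show (∑' u : Mem Val Var (Z ∪ X), if Agree u (restr hZYW_E w) then
            k2 (restr hZ_E w) u else 0)
          ≤ ∑' u : Mem Val Var (Z ∪ X), if Agree u (restr hZW_E w) then
            k2 (restr hZ_ZW (restr hZW_E w)) u else 0
        refine ENNReal.tsum_le_tsum fun u => ?_
        by_cases hu : Agree u (restr hZYW_E w)
        · rw [if_pos hu, if_pos (show Agree u (restr hZW_E w) from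
            fun i h1' h2' => (hu i h1' (hZW_ZYW h2')).trans rfl)]
          exact le_rfl
        · rw [if_neg hu]
          exact zero_le
      calc (podot G1 (poplus G2 G3)).f e (restr hS_E w)
          = ∑' m : Mem Val Var (Z ∪ W),
              (k1 estar (restr hZ_ZW m) * lam m) *
                (G2.f m (restr hZWX_E w) * G3.f m (restr hZWY_E w)) := hGf e (restr hS_E w)
        _ = (k1 estar (restr hZ_ZW (restr hZW_E w)) * lam (restr hZW_E w)) *
              (G2.f (restr hZW_E w) (restr hZWX_E w) *
                G3.f (restr hZW_E w) (restr hZWY_E w)) := by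
            refine tsum_eq_single (restr hZW_E w) fun m hm => ?_
            have hg2 : G2.f m (restr hZWX_E w) = 0 := by
              change (if am m = 0 then dirac (glueMem hcov2 m p2) (restr hZWX_E w)
                else if restr hZW_ZWX (restr hZWX_E w) = m then
                  k2 (restr hZ_ZW m) (restr hZX_ZWX (restr hZWX_E w)) * (am m)⁻¹ else 0) = 0
              by_cases ham : am m = 0
              · rw [if_pos ham]
                have hq : restr hZWX_E w ≠ glueMem hcov2 m p2 := by
                  intro hq
                  apply hm
                  calc m = restr hZW_ZWX (glueMem hcov2 m p2) :=
                        (restr_glueMem hcov2 hZW_ZWX m p2).symm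
                    _ = restr hZW_ZWX (restr hZWX_E w) := by rw [hq]
                    _ = restr hZW_E w := rfl
                simp only [dirac, if_neg hq]
              · rw [if_neg ham, if_neg (fun hc => hm (hc.symm.trans
                  (show restr hZW_ZWX (restr hZWX_E w) = restr hZW_E w from rfl)))]
            rw [hg2, zero_mul, mul_zero]
        _ = k1 estar (restr hZ_E w) *
              (k2 (restr hZ_E w) (restr hZX_E w) * k3 (restr hZ_E w) (restr hZYW_E w)) := by
            show (k1 estar (restr hZ_E w) * lam (restr hZW_E w)) *
              (G2.f (restr hZW_E w) (restr hZWX_E w) *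
                G3.f (restr hZW_E w) (restr hZWY_E w))
              = k1 estar (restr hZ_E w) *
                (k2 (restr hZ_E w) (restr hZX_E w) * k3 (restr hZ_E w) (restr hZYW_E w))
            by_cases h1 : k1 estar (restr hZ_E w) = 0
            · simp only [h1, zero_mul, mul_zero]
            · by_cases h3 : k3 (restr hZ_E w) (restr hZYW_E w) = 0
              · by_cases hlm : lam (restr hZW_E w) = 0
                · simp only [hlm, h3, mul_zero, zero_mul]
                · have hg3 : G3.f (restr hZW_E w) (restr hZWY_E w) = 0 := by
                    change (if lam (restr hZW_E w) = 0 then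
                        dirac (glueMem hcov3 (restr hZW_E w) p3) (restr hZWY_E w)
                      else if restr hZW_ZWY (restr hZWY_E w) = restr hZW_E w then
                        k3 (restr hZ_ZW (restr hZW_E w)) (restr hZYW_ZWY (restr hZWY_E w)) *
                          (lam (restr hZW_E w))⁻¹ else 0) = 0
                    rw [if_neg hlm, if_pos (show restr hZW_ZWY (restr hZWY_E w)
                        = restr hZW_E w from rfl),
                      show k3 (restr hZ_ZW (restr hZW_E w)) (restr hZYW_ZWY (restr hZWY_E w))
                        = k3 (restr hZ_E w) (restr hZYW_E w) from rfl, h3, zero_mul]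
                  rw [hg3]
                  simp only [h3, mul_zero]
              · have ham1 : am (restr hZW_E w) = 1 := hforce h1 h3
                have hlm : lam (restr hZW_E w) ≠ 0 := fun h0 =>
                  h3 (le_antisymm (h0 ▸ hk3le) zero_le)
                have hG2v : G2.f (restr hZW_E w) (restr hZWX_E w)
                    = k2 (restr hZ_E w) (restr hZX_E w) := by
                  change (if am (restr hZW_E w) = 0 then
                      dirac (glueMem hcov2 (restr hZW_E w) p2) (restr hZWX_E w)
                    else if restr hZW_ZWX (restr hZWX_E w) = restr hZW_E w then
                      k2 (restr hZ_ZW (restr hZW_E w)) (restr hZX_ZWX (restr hZWX_E w)) *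
                        (am (restr hZW_E w))⁻¹ else 0)
                    = k2 (restr hZ_E w) (restr hZX_E w)
                  rw [if_neg (show ¬am (restr hZW_E w) = 0 by rw [ham1]; exact one_ne_zero),
                    if_pos (show restr hZW_ZWX (restr hZWX_E w) = restr hZW_E w from rfl),
                    ham1, inv_one, mul_one]
                  rfl
                have hG3v : G3.f (restr hZW_E w) (restr hZWY_E w)
                    = k3 (restr hZ_E w) (restr hZYW_E w) * (lam (restr hZW_E w))⁻¹ := by
                  change (if lam (restr hZW_E w) = 0 then
                      dirac (glueMem hcov3 (restr hZW_E w) p3) (restr hZWY_E w)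
                    else if restr hZW_ZWY (restr hZWY_E w) = restr hZW_E w then
                      k3 (restr hZ_ZW (restr hZW_E w)) (restr hZYW_ZWY (restr hZWY_E w)) *
                        (lam (restr hZW_E w))⁻¹ else 0)
                    = k3 (restr hZ_E w) (restr hZYW_E w) * (lam (restr hZW_E w))⁻¹
                  rw [if_neg hlm, if_pos (show restr hZW_ZWY (restr hZWY_E w)
                    = restr hZW_E w from rfl)]
                  rfl
                rw [hG2v, hG3v]
                calc (k1 estar (restr hZ_E w) * lam (restr hZW_E w)) *
                      (k2 (restr hZ_E w) (restr hZX_E w) *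
                        (k3 (restr hZ_E w) (restr hZYW_E w) * (lam (restr hZW_E w))⁻¹))
                    = (k1 estar (restr hZ_E w) *
                        (k2 (restr hZ_E w) (restr hZX_E w) *
                          k3 (restr hZ_E w) (restr hZYW_E w))) *
                        (lam (restr hZW_E w) * (lam (restr hZW_E w))⁻¹) := by ring
                  _ = k1 estar (restr hZ_E w) *
                        (k2 (restr hZ_E w) (restr hZX_E w) *
                          k3 (restr hZ_E w) (restr hZYW_E w)) := by
                      rw [ENNReal.mul_inv_cancel hlm (hlam_top _), mul_one]
        _ = ∑' z : Mem Val Var Z, k1 estar z *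
              (k2 z (restr hZX_E w) * k3 z (restr hZYW_E w)) := by
            symm
            refine tsum_eq_single (restr hZ_E w) fun z hz => ?_
            by_cases hk : k2 z (restr hZX_E w) = 0
            · rw [hk, zero_mul, mul_zero]
            · exact absurd (((show restr hZ_ZX (restr hZX_E w) = restr hZ_E w from
                rfl).symm.trans (hk2supp z _ hk)).symm) hz
        _ = (podot (⟨∅, Z, k1⟩ : PKernel Val Var)
              (poplus (⟨Z, Z ∪ X, k2⟩ : PKernel Val Var)
                (⟨Z, Z ∪ Y ∪ W, k3⟩ : PKernel Val Var))).f e (restr hT_E w) := by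
            symm
            exact hFf e (restr hT_E w)
    -- assembling the kernel equality
    have hset : Z ∪ W ∪ X ∪ (Z ∪ W ∪ Y) ∪ R0 = Z ∪ X ∪ (Z ∪ Y ∪ W) ∪ R0 := by
      ext i
      simp only [Set.mem_union]
      tauto
    refine pk_eq _ _ fun d mR => ?_
    calc (podot (poplus (podot (⟨∅, Z, k1⟩ : PKernel Val Var)
          (poplus (⟨Z, Z ∪ X, k2⟩ : PKernel Val Var) (⟨Z, Z ∪ Y ∪ W, k3⟩ : PKernel Val Var)))
          (unitK Val Var R0))
          (⟨Z ∪ X ∪ (Z ∪ Y ∪ W) ∪ R0, Rh, kh⟩ : PKernel Val Var)).f d mR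
        = ∑' m' : Mem Val Var (Z ∪ X ∪ (Z ∪ Y ∪ W) ∪ R0),
            (poplus (podot (⟨∅, Z, k1⟩ : PKernel Val Var)
              (poplus (⟨Z, Z ∪ X, k2⟩ : PKernel Val Var) (⟨Z, Z ∪ Y ∪ W, k3⟩ : PKernel Val Var)))
              (unitK Val Var R0)).f d m' * kh m' mR := dif_pos rfl
      _ = ∑' m' : Mem Val Var (Z ∪ X ∪ (Z ∪ Y ∪ W) ∪ R0),
            (poplus (podot G1 (poplus G2 G3)) (unitK Val Var R0)).f d
              (restr (le_of_eq hset) m') * kh m' mR := by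
          refine tsum_congr fun m' => ?_
          have hm' := main (hmass2 d) (restr Set.subset_union_left d) m'
          calc (poplus (podot (⟨∅, Z, k1⟩ : PKernel Val Var)
                (poplus (⟨Z, Z ∪ X, k2⟩ : PKernel Val Var)
                  (⟨Z, Z ∪ Y ∪ W, k3⟩ : PKernel Val Var)))
                (unitK Val Var R0)).f d m' * kh m' mR
              = ((podot (⟨∅, Z, k1⟩ : PKernel Val Var)
                  (poplus (⟨Z, Z ∪ X, k2⟩ : PKernel Val Var)
                    (⟨Z, Z ∪ Y ∪ W, k3⟩ : PKernel Val Var))).f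
                    (restr Set.subset_union_left d) (restr hT_E m') *
                  (unitK Val Var R0).f (restr Set.subset_union_right d)
                    (restr hR_E m')) * kh m' mR := rfl
            _ = ((podot G1 (poplus G2 G3)).f (restr Set.subset_union_left d)
                    (restr hS_E m') *
                  (unitK Val Var R0).f (restr Set.subset_union_right d)
                    (restr hR_E m')) * kh m' mR := congrArg (· * _ * kh m' mR) hm'.symm
            _ = (poplus (podot G1 (poplus G2 G3)) (unitK Val Var R0)).f d
                  (restr (le_of_eq hset) m') * kh m' mR := rfl
      _ = ∑' n' : Mem Val Var (Z ∪ W ∪ X ∪ (Z ∪ W ∪ Y) ∪ R0),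
            (poplus (podot G1 (poplus G2 G3)) (unitK Val Var R0)).f d n' *
              kh (restr (le_of_eq hset.symm) n') mR :=
          tsum_mem_reindex hset _
      _ = (podot (poplus (podot G1 (poplus G2 G3)) (unitK Val Var R0))
            (⟨Z ∪ X ∪ (Z ∪ Y ∪ W) ∪ R0, Rh, kh⟩ : PKernel Val Var)).f d mR := by
          symm
          exact dif_pos hset
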